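/- Let A be a finite automaton in which every state has at least one outgoing transition, and let L^ω_{¬f}(A) be the set of infinite traces containing no f. Then Pref(L^ω_{¬f}(A)) equals the set of finite fault-free traces w such that the run on w can reach a state q from which an infinite fault-free run exists; equivalently, the automaton A₂ obtained by restricting A to the set F_{¬f} of states admitting an infinite fault-free run, with all states accepting, accepts exactly Pref(Tr(NonFaulty^ω(A))) after unobservable relabeling is ignored. -/

import Mathlib

/-- A finite run from `q` to `q'` labeled by the word `w`. -/
def RunOn {Q A : Type*} (E : Q → A → Q → Prop) (q : Q) (w : List A) (q' : Q) : Prop :=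
  ∃ p : ℕ → Q, p 0 = q ∧ p w.length = q' ∧
    ∀ i : Fin w.length, E (p i.val) (w.get i) (p (i.val + 1))

/-- There is an infinite fault-free run from `q`. -/
def InfFF {Q A : Type*} (E : Q → A → Q → Prop) (f : A) (q : Q) : Prop :=
  ∃ (p : ℕ → Q) (a : ℕ → A), p 0 = q ∧ ∀ i, E (p i) (a i) (p (i + 1)) ∧ a i ≠ f

/-- in an automaton where every state has an outgoing transition, the
finite prefixes of infinite fault-free traces are exactly the finite fault-free traces
whose run can reach a state from which an infinite fault-free run exists. -/
theorem pref_omega_faultfree_characterization {Q A : Type*}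
    (E : Q → A → Q → Prop) (f : A) (q0 : Q)
    (hout : ∀ q : Q, ∃ (a : A) (q' : Q), E q a q') :
    let Lω : Set (ℕ → A) :=
      {a | ∃ p : ℕ → Q, p 0 = q0 ∧ ∀ i, E (p i) (a i) (p (i + 1)) ∧ a i ≠ f}
    {u : List A | ∃ w ∈ Lω, ∀ i : Fin u.length, u.get i = w i.val} =
    {w : List A | f ∉ w ∧ ∃ q : Q, RunOn E q0 w q ∧ InfFF E f q} := by
  intro Lω
  ext u
  simp only [Set.mem_setOf_eq]
  constructor
  · rintro ⟨w, ⟨p, hp0, hstep⟩, hpref⟩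
    refine ⟨?_, p u.length, ⟨p, hp0, rfl, ?_⟩, ?_⟩
    · intro hf
      obtain ⟨i, hi⟩ := List.mem_iff_get.1 hf
      exact (hstep i).2 (hi ▸ (hpref i).symm)
    · intro i
      rw [hpref i]
      exact (hstep i).1
    · exact ⟨fun k => p (u.length + k), fun k => w (u.length + k), rfl,
        fun k => by simpa [Nat.add_assoc] using hstep (u.length + k)⟩
  · rintro ⟨hf, q, ⟨p, hp0, hpn, hpstep⟩, pinf, ainf, hpi0, hinf⟩
    set n := u.length with hn
    refine ⟨fun i => if h : i < n then u.get ⟨i, h⟩ else ainf (i - n),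
      ⟨fun i => if i < n then p i else pinf (i - n), ?_, ?_⟩, ?_⟩
    · by_cases h0 : 0 < n
      · simp [h0, hp0]
      · have : n = 0 := by omega
        simp [h0, hpi0, ← hpn, this, ← hp0]
    · intro i
      by_cases h : i < n
      · have hE := hpstep ⟨i, h⟩
        have hne : u.get ⟨i, h⟩ ≠ f := fun hc => hf (hc ▸ List.get_mem u ⟨i, h⟩)
        by_cases h1 : i + 1 < n
        · simp only [dif_pos h, if_pos h, if_pos h1]
          exact ⟨hE, hne⟩
        · have he : i + 1 = n := by omega
          have h2 : i + 1 - n = 0 := by omega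
          rw [he, hpn] at hE
          simp only [dif_pos h, if_pos h, if_neg h1, h2, hpi0]
          exact ⟨hE, hne⟩
      · have h1 : ¬ i + 1 < n := by omega
        have h2 : i + 1 - n = (i - n) + 1 := by omega
        simp only [dif_neg h, if_neg h, if_neg h1, h2]
        exact hinf (i - n)
    · intro i
      simp [i.isLt, hn, Nat.not_le.mpr i.isLt]
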